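/- Let x = x₄ b₄ a^{k₃} x₅ b₁ a^{k₁} be a string of length m, where x₄, x₅ ∈ Σ*, a, b₁, b₄ ∈ Σ with b₁ ≠ a and b₄ ≠ a, and k₁, k₃ ≥ 1 are integers with k₃ ≥ k₁. Let ℓ₃ = |x₄ b₄| and e = ℓ₃ + k₁ - 1. Then for every position i with ℓ₃ ≤ i < e, suff[i] = i - ℓ₃ + 1. -/

import Mathlib

/-- `suffT x i` is the length of the longest common suffix of `x` and `x[0..i]`,
i.e. the largest `k` with `0 ≤ k ≤ i+1` such that `x[i-k+1..i] = x[m-k..m-1]`. -/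
def suffT {α : Type*} [DecidableEq α] (x : List α) (i : ℕ) : ℕ :=
  Nat.findGreatest
    (fun k => (x.take (i + 1)).drop (i + 1 - k) = x.drop (x.length - k)) (i + 1)

/-- `Cond-suf(i,d)`: either `0 < d ≤ i+1` and `x[i-d+1..m-d-1]` is a suffix of `x`,
or `i+1 < d` and `x[0..m-d-1]` is a suffix of `x`. -/
def CondSuf {α : Type*} (x : List α) (i d : ℕ) : Prop :=
  (0 < d ∧ d ≤ i + 1 ∧ (x.drop (i + 1 - d)).take (x.length - 1 - i) <:+ x) ∨
  (i + 1 < d ∧ x.take (x.length - d) <:+ x)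

/-- `Cond-occ(i,d)`: either `0 < d ≤ i` and `x[i-d] ≠ x[i]`, or `i < d`. -/
def CondOcc {α : Type*} (x : List α) (i d : ℕ) : Prop :=
  (0 < d ∧ d ≤ i ∧ x[i - d]? ≠ x[i]?) ∨ i < d

/-- `goodSuff x i = min { d | Cond-suf(i,d) and Cond-occ(i,d) }`. -/
noncomputable def goodSuff {α : Type*} (x : List α) (i : ℕ) : ℕ :=
  sInf {d | CondSuf x i d ∧ CondOcc x i d}

/-- Let `x = x₄ b₄ a^{k₃} x₅ b₁ a^{k₁}` with `b₁ ≠ a`, `b₄ ≠ a`,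
`k₁, k₃ ≥ 1`, `k₃ ≥ k₁`. Let `ℓ₃ = |x₄ b₄|` and `e = ℓ₃ + k₁ - 1`.
Then for every position `i` with `ℓ₃ ≤ i < e`, `suff[i] = i - ℓ₃ + 1`. -/
theorem statement7 {α : Type*} [DecidableEq α] (x₄ x₅ : List α) (a b₁ b₄ : α) (k₁ k₃ : ℕ)
    (hb₁ : b₁ ≠ a) (hb₄ : b₄ ≠ a) (hk₁ : 1 ≤ k₁) (hk₃ : 1 ≤ k₃) (hkk : k₃ ≥ k₁)
    (x : List α)
    (hx : x = x₄ ++ [b₄] ++ List.replicate k₃ a ++ x₅ ++ [b₁] ++ List.replicate k₁ a)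
    (i : ℕ) (hℓ : x₄.length + 1 ≤ i) (he : i < (x₄.length + 1) + k₁ - 1) :
    suffT x i = i - (x₄.length + 1) + 1 := by
  subst hx
  set p : List α := x₄ ++ [b₄] with hp
  set q : List α := p ++ List.replicate k₃ a ++ x₅ ++ [b₁] with hq
  have hplen : p.length = x₄.length + 1 := by simp [hp]
  have hqlen : q.length = x₄.length + 1 + k₃ + x₅.length + 1 := by
    simp [hq, hplen]; ring
  have hxlen : (q ++ List.replicate k₁ a).length = q.length + k₁ := by simp
  set m := (q ++ List.replicate k₁ a).length with hm
  set d := i - (x₄.length + 1) + 1 with hd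
  have hd1 : 1 ≤ d := by omega
  have hdk : d ≤ k₁ - 1 := by omega
  have him : i + 1 ≤ m := by omega
  rw [suffT, Nat.findGreatest_eq_iff]
  refine ⟨by omega, fun _ => ?_, fun n hn1 hn2 hPn => ?_⟩
  · -- P d holds
    have h1 : i + 1 - d = p.length := by omega
    have htake : List.take (i + 1) (q ++ List.replicate k₁ a)
        = p ++ List.replicate d a := by
      rw [hq]
      rw [show p ++ List.replicate k₃ a ++ x₅ ++ [b₁] ++ List.replicate k₁ a
          = p ++ (List.replicate k₃ a ++ (x₅ ++ ([b₁] ++ List.replicate k₁ a))) by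
        simp [List.append_assoc]]
      rw [show i + 1 = p.length + d by omega, List.take_length_add_append,
        List.take_append, List.take_replicate]
      have h3 : d ⊓ k₃ = d := by omega
      have h4 : d - (List.replicate k₃ a).length = 0 := by simp; omega
      rw [h3, h4, List.take_zero, List.append_nil]
    rw [h1, htake, List.drop_left]
    have h5 : m - d = q.length + (k₁ - d) := by omega
    rw [h5, List.drop_length_add_append, List.drop_replicate]
    congr 1
    omega
  · -- no larger n works
    have := congrArg (fun l => l[n - d - 1]?) hPn
    simp only [List.getElem?_drop] at this
    have e1 : i + 1 - n + (n - d - 1) = x₄.length := by omega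
    have e2 : m - n + (n - d - 1) = m - d - 1 := by omega
    rw [e1, e2, List.getElem?_take] at this
    rw [if_pos (by omega)] at this
    have e3 : (q ++ List.replicate k₁ a)[x₄.length]? = some b₄ := by
      rw [hq]
      rw [show p ++ List.replicate k₃ a ++ x₅ ++ [b₁] ++ List.replicate k₁ a
          = p ++ (List.replicate k₃ a ++ (x₅ ++ ([b₁] ++ List.replicate k₁ a))) by
        simp [List.append_assoc]]
      rw [List.getElem?_append_left (by omega), hp, List.getElem?_concat_length]
    have e4 : (q ++ List.replicate k₁ a)[m - d - 1]? = some a := by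
      rw [List.getElem?_append_right (by omega), List.getElem?_replicate,
        if_pos (by omega)]
    rw [e3, e4] at this
    exact hb₄ (Option.some.injEq _ _ ▸ this)
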